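/- Suppose {α_k}_{k∈ℕ} is a sequence of positive reals and the index set ℕ is partitioned as K_s ∪ K_u, where α_{k+1} = φ α_k for k ∈ K_s and α_{k+1} = θ α_k for k ∈ K_u, with φ ≥ 1 and θ ∈ (0,1). If α_k → 0 along K_s (in case K_s is infinite) and, in case K_s is finite, K_u contains all sufficiently large indices, then the full sequence α_k → 0, provided additionally that (when K_s is infinite) lim_{k→∞, k∈K_s} α_k = 0. -/

import Mathlib

open Filter

theorem stmt_6 (α : ℕ → ℝ) (φ θ : ℝ) (Ks : Set ℕ)
    (hφ : 1 ≤ φ) (hθ0 : 0 < θ) (hθ1 : θ < 1)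
    (hα0 : 0 < α 0)
    (hupd : ∀ k : ℕ, (k ∈ Ks → α (k + 1) = φ * α k) ∧ (k ∉ Ks → α (k + 1) = θ * α k))
    (hcase : Ks.Finite ∨ (Ks.Infinite ∧
      Tendsto (fun k => α k) (atTop ⊓ Filter.principal Ks) (nhds 0))) :
    Tendsto α atTop (nhds 0) := by
  have hφ0 : (0:ℝ) < φ := lt_of_lt_of_le one_pos hφ
  have hpos : ∀ k, 0 < α k := by
    intro k
    induction k with
    | zero => exact hα0
    | succ k ih =>
      by_cases hk : k ∈ Ks
      · rw [(hupd k).1 hk]; positivity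
      · rw [(hupd k).2 hk]; positivity
  rcases hcase with hfin | ⟨hinf, htend⟩
  · obtain ⟨N, hN⟩ := hfin.bddAbove
    have hiter : ∀ n, α (n + (N+1)) = θ ^ n * α (N+1) := by
      intro n
      induction n with
      | zero => simp
      | succ n ih =>
        have hk : n + (N+1) ∉ Ks := by
          intro h
          have := hN h
          omega
        have h2 : α (n + (N+1) + 1) = θ * α (n + (N+1)) := (hupd _).2 hk
        rw [show n + 1 + (N+1) = n + (N+1) + 1 by ring, h2, ih, pow_succ]
        ring
    have h1 : Tendsto (fun n => α (n + (N+1))) atTop (nhds 0) := by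
      have h0 : Tendsto (fun n => θ ^ n * α (N+1)) atTop (nhds 0) := by
        simpa using (tendsto_pow_atTop_nhds_zero_of_lt_one hθ0.le hθ1).mul_const (α (N+1))
      exact h0.congr (fun n => (hiter n).symm)
    exact (tendsto_add_atTop_iff_nat (N+1)).mp h1
  · rw [Metric.tendsto_atTop]
    intro ε hε
    have hε' : 0 < ε / (2 * φ) := by positivity
    have hev : ∀ᶠ k in atTop ⊓ principal Ks, |α k| < ε / (2 * φ) := by
      have := Metric.tendsto_nhds.mp htend (ε / (2*φ)) hε'
      simpa [Real.dist_eq] using this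
    rw [eventually_inf_principal] at hev
    obtain ⟨N, hN⟩ := eventually_atTop.mp hev
    obtain ⟨j0, hj0Ks, hj0N⟩ := hinf.exists_gt N
    have key : ∀ k, j0 < k → α k ≤ φ * (ε / (2*φ)) := by
      intro k hk
      induction k with
      | zero => omega
      | succ k ih =>
        by_cases hkj : j0 < k
        · by_cases hks : k ∈ Ks
          · have hak : α k ≤ ε / (2*φ) :=
              le_of_lt (lt_of_abs_lt (hN k (by omega) hks))
            rw [(hupd k).1 hks]
            exact mul_le_mul_of_nonneg_left hak hφ0.le
          · rw [(hupd k).2 hks]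
            calc θ * α k ≤ 1 * α k :=
                  mul_le_mul_of_nonneg_right hθ1.le (hpos k).le
            _ = α k := one_mul _
            _ ≤ _ := ih hkj
        · have hkeq : k = j0 := by omega
          subst hkeq
          rw [(hupd k).1 hj0Ks]
          have hj : α k ≤ ε/(2*φ) :=
            le_of_lt (lt_of_abs_lt (hN k hj0N.le hj0Ks))
          exact mul_le_mul_of_nonneg_left hj hφ0.le
    refine ⟨j0 + 1, fun k hk => ?_⟩
    rw [Real.dist_eq, sub_zero, abs_of_pos (hpos k)]
    have hkey := key k (by omega)
    have h2 : φ * (ε / (2*φ)) = ε / 2 := by field_simp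
    linarith
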